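/- Let S be a finite set of natural numbers that is progression-free, i.e., for all i, j, h ∈ S, i + j = 2h implies i = j. Let R be a commutative ring, let α, β : S → R, and form the polynomials A = Σ_{i ∈ S} α(i)·Xⁱ and B = Σ_{j ∈ S} β(j)·Xʲ in R[X]. Then for every i ∈ S, the coefficient of X^(2i) in A·B equals α(i)·β(i). -/
import Mathlib


open Polynomial in
/-- If `S` is progression-free, then for the polynomials `A = Σ_{i ∈ S} α(i) Xⁱ` and
`B = Σ_{j ∈ S} β(j) Xʲ`, the coefficient of `X^(2i)` in `A·B` equals `α(i)·β(i)`
for every `i ∈ S`. -/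
theorem progression_free_coeff {R : Type*} [CommRing R] (S : Finset ℕ)
    (hS : ∀ i ∈ S, ∀ j ∈ S, ∀ h ∈ S, i + j = 2 * h → i = j)
    (α β : ℕ → R) :
    ∀ i ∈ S,
      ((∑ i ∈ S, C (α i) * X ^ i) * (∑ j ∈ S, C (β j) * X ^ j)).coeff (2 * i) =
        α i * β i := by
  intro i hi
  have key : ∀ a ∈ S, ∀ b ∈ S, a + b = 2 * i → a = i ∧ b = i := by
    intro a ha b hb hab
    have hab' : a = b := hS a ha b hb i hi hab
    subst hab'
    omega
  rw [Finset.sum_mul_sum, finset_sum_coeff, Finset.sum_eq_single i]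
  · rw [finset_sum_coeff, Finset.sum_eq_single i]
    · rw [mul_mul_mul_comm, ← pow_add, ← C_mul, coeff_C_mul, coeff_X_pow,
        if_pos (by omega)]
      ring
    · intro b hb hbi
      have hne : i + b ≠ 2 * i := fun h => hbi (key i hi b hb h).2
      rw [mul_mul_mul_comm, ← pow_add, ← C_mul, coeff_C_mul, coeff_X_pow,
        if_neg (fun h => hne h.symm), mul_zero]
    · exact fun h => absurd hi h
  · intro a ha hai
    rw [finset_sum_coeff, Finset.sum_eq_zero]
    intro b hb
    have hne : a + b ≠ 2 * i := fun h => hai (key a ha b hb h).1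
    rw [mul_mul_mul_comm, ← pow_add, ← C_mul, coeff_C_mul, coeff_X_pow,
      if_neg (fun h => hne h.symm), mul_zero]
  · exact fun h => absurd hi h
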